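/- (i) For every integer N ≥ 12 there exist a positive integer r and an IrMOA(r, 2+N, 3²2^N, 2); (ii) for every integer N ≥ 11 there exist a positive integer r and an IrMOA(r, 3+N, 3³2^N, 2); (iii) for every integer N ≥ 10 there exist a positive integer r and an IrMOA(r, 4+N, 3⁴2^N, 2). -/

import Mathlib

open Finset

/-- The Hamming distance between two rows of an array: the number of columns
in which the rows differ. -/
def hamDist {ι κ : Type*} [Fintype κ] (A : ι → κ → ℕ) (i i' : ι) : ℕ :=
  (Finset.univ.filter fun j => A i j ≠ A i' j).card

/-- `MD(A)`: the minimum Hamming distance over all pairs of distinct rows. -/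
noncomputable def minDist {ι κ : Type*} [Fintype κ] (A : ι → κ → ℕ) : ℕ :=
  sInf {n | ∃ i i', i ≠ i' ∧ hamDist A i i' = n}

/-- `A` is a mixed orthogonal array of strength `k` (rows indexed by `ι`,
columns by `κ`, column `j` taking values in `{0, …, lv j − 1}`): in the
subarray given by any choice of at most `k` columns, every tuple of symbols
occurs equally often as a row, namely (number of rows)/(product of the levels
of the chosen columns) times. -/
def IsMOA {ι κ : Type*} [Fintype ι] [Fintype κ] [DecidableEq κ]
    (A : ι → κ → ℕ) (lv : κ → ℕ) (k : ℕ) : Prop :=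
  (∀ i j, A i j < lv j) ∧
  ∀ S : Finset κ, S.card ≤ k → ∀ x : κ → ℕ, (∀ j ∈ S, x j < lv j) →
    (Finset.univ.filter fun i : ι => ∀ j ∈ S, A i j = x j).card * ∏ j ∈ S, lv j
      = Fintype.card ι

/-- An irredundant mixed orthogonal array of strength `k`: an MOA of strength
`k` any two distinct rows of which have Hamming distance at least `k+1`. -/
def IsIrMOA {ι κ : Type*} [Fintype ι] [Fintype κ] [DecidableEq κ]
    (A : ι → κ → ℕ) (lv : κ → ℕ) (k : ℕ) : Prop :=
  IsMOA A lv k ∧ ∀ i i' : ι, i ≠ i' → k + 1 ≤ hamDist A i i'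

/-- A difference scheme `D(r, c, d)`: an `r × c` matrix over `ℤ_d` such that
for any two distinct columns the `r` differences of corresponding entries
take each value of `ℤ_d` exactly `r/d` times. -/
def IsDiffScheme {r c d : ℕ} (B : Fin r → Fin c → ZMod d) : Prop :=
  ∀ j j' : Fin c, j ≠ j' → ∀ g : ZMod d,
    (Finset.univ.filter fun i : Fin r => B i j - B i j' = g).card * d = r

/-- (i) For every `N ≥ 12` there is an `IrMOA(r, 2+N, 3²2^N, 2)`;
(ii) for every `N ≥ 11` there is an `IrMOA(r, 3+N, 3³2^N, 2)`;
(iii) for every `N ≥ 10` there is an `IrMOA(r, 4+N, 3⁴2^N, 2)`. -/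



lemma zval_eq_iff {n : ℕ} [NeZero n] (z : ZMod n) (x : ℕ) (hx : x < n) :
    ZMod.val z = x ↔ z = (x : ZMod n) := by
  constructor
  · intro h
    apply ZMod.val_injective
    rw [ZMod.val_cast_of_lt hx, h]
  · rintro rfl
    exact ZMod.val_cast_of_lt hx

lemma card_filter_prod {α β : Type*} [Fintype α] [Fintype β] [DecidableEq α]
    (P : α × β → Prop) [DecidablePred P] :
    (univ.filter P).card = ∑ u : α, (univ.filter fun c : β => P (u, c)).card := by
  rw [Finset.card_eq_sum_card_fiberwise (f := Prod.fst) (t := univ) (fun x _ => mem_univ _)]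
  refine Finset.sum_congr rfl fun u _ => ?_
  refine Finset.card_bij (fun p _ => p.2) ?_ ?_ ?_
  · rintro ⟨u', c⟩ hp
    simp only [mem_filter, mem_univ, true_and] at hp ⊢
    obtain ⟨h1, h2⟩ := hp
    subst h2; exact h1
  · rintro ⟨u1, c1⟩ h1 ⟨u2, c2⟩ h2 h
    simp only [mem_filter, mem_univ, true_and] at h1 h2
    dsimp only at h
    obtain ⟨-, rfl⟩ := h1
    obtain ⟨-, h2'⟩ := h2
    subst h2'; subst h; rfl
  · intro c hc
    simp only [mem_filter, mem_univ, true_and] at hc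
    exact ⟨(u, c), by simp [hc], rfl⟩

lemma card_filter_and {α β : Type*} [Fintype α] [Fintype β]
    (Q : α → Prop) (R : β → Prop) [DecidablePred Q] [DecidablePred R] :
    (univ.filter fun p : α × β => Q p.1 ∧ R p.2).card
      = (univ.filter Q).card * (univ.filter R).card := by
  rw [← Finset.univ_product_univ, Finset.filter_product, Finset.card_product]

lemma card_filter_fst {α β : Type*} [Fintype α] [Fintype β]
    (Q : α → Prop) [DecidablePred Q] :
    (univ.filter fun p : α × β => Q p.1).card = (univ.filter Q).card * Fintype.card β := by
  have : (univ.filter fun p : α × β => Q p.1) = (univ.filter Q) ×ˢ (univ : Finset β) := by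
    ext ⟨a, b⟩; simp
  rw [this, Finset.card_product, Finset.card_univ]

lemma card_filter_snd {α β : Type*} [Fintype α] [Fintype β]
    (R : β → Prop) [DecidablePred R] :
    (univ.filter fun p : α × β => R p.2).card = Fintype.card α * (univ.filter R).card := by
  have : (univ.filter fun p : α × β => R p.2) = (univ : Finset α) ×ˢ (univ.filter R) := by
    ext ⟨a, b⟩; simp
  rw [this, Finset.card_product, Finset.card_univ]

lemma card_filter_sum {κ1 κ2 : Type*} [Fintype κ1] [Fintype κ2]
    (P : κ1 ⊕ κ2 → Prop) [DecidablePred P] :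
    (univ.filter P).card
      = (univ.filter fun j => P (Sum.inl j)).card + (univ.filter fun j => P (Sum.inr j)).card := by
  have h1 : (univ.filter P).toLeft = univ.filter fun j => P (Sum.inl j) := by
    ext x; simp
  have h2 : (univ.filter P).toRight = univ.filter fun j => P (Sum.inr j) := by
    ext x; simp
  rw [← h1, ← h2, ← Finset.card_disjSum, Finset.toLeft_disjSum_toRight]



variable {ι κ : Type*} [Fintype ι] [Fintype κ] [DecidableEq κ]

lemma moa_single {A : ι → κ → ℕ} {lv : κ → ℕ} (h : IsMOA A lv 2)
    (j : κ) (x : ℕ) (hx : x < lv j) :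
    (univ.filter fun i => A i j = x).card * lv j = Fintype.card ι := by
  have := h.2 {j} (by simp) (fun _ => x) (by simpa using hx)
  simpa using this

lemma moa_pair {A : ι → κ → ℕ} {lv : κ → ℕ} (h : IsMOA A lv 2)
    {j j' : κ} (hne : j ≠ j') (x x' : ℕ) (hx : x < lv j) (hx' : x' < lv j') :
    (univ.filter fun i => A i j = x ∧ A i j' = x').card * (lv j * lv j')
      = Fintype.card ι := by
  have key := h.2 {j, j'} (by rw [Finset.card_pair hne]) (fun t => if t = j then x else x')
    (by
      intro t ht
      rcases Finset.mem_insert.mp ht with rfl | ht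
      · simpa using hx
      · rcases Finset.mem_singleton.mp ht with rfl
        simpa [hne.symm] using hx')
  rw [Finset.prod_pair hne] at key
  rw [← key]
  congr 1
  refine congrArg Finset.card ?_
  apply Finset.filter_congr
  intro i _
  simp [hne.symm]

lemma isMOA_of_pairs (A : ι → κ → ℕ) (lv : κ → ℕ)
    (hb : ∀ i j, A i j < lv j)
    (h1 : ∀ j, ∀ x : ℕ, x < lv j →
      (univ.filter fun i => A i j = x).card * lv j = Fintype.card ι)
    (h2 : ∀ j j', j ≠ j' → ∀ x x' : ℕ, x < lv j → x' < lv j' →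
      (univ.filter fun i => A i j = x ∧ A i j' = x').card * (lv j * lv j')
        = Fintype.card ι) :
    IsMOA A lv 2 := by
  refine ⟨hb, fun S hS x hx => ?_⟩
  obtain h0 | hc1 | hc2 : S.card = 0 ∨ S.card = 1 ∨ S.card = 2 := by omega
  · obtain rfl := Finset.card_eq_zero.mp h0
    simp
  · obtain ⟨j, rfl⟩ := Finset.card_eq_one.mp hc1
    have : (univ.filter fun i : ι => ∀ t ∈ ({j} : Finset κ), A i t = x t)
        = univ.filter fun i => A i j = x j := by
      apply Finset.filter_congr; intro i _; simp
    rw [this, Finset.prod_singleton]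
    exact h1 j (x j) (hx j (Finset.mem_singleton_self j))
  · obtain ⟨j, j', hne, rfl⟩ := Finset.card_eq_two.mp hc2
    have : (univ.filter fun i : ι => ∀ t ∈ ({j, j'} : Finset κ), A i t = x t)
        = univ.filter fun i => A i j = x j ∧ A i j' = x j' := by
      apply Finset.filter_congr; intro i _; simp
    rw [this, Finset.prod_pair hne]
    exact h2 j j' hne (x j) (x j')
      (hx j (by simp)) (hx j' (by simp))

lemma irMOA_rows {ι' : Type*} [Fintype ι'] (e : ι' ≃ ι)
    {A : ι → κ → ℕ} {lv : κ → ℕ} (h : IsIrMOA A lv 2) :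
    IsIrMOA (fun i j => A (e i) j) lv 2 := by
  obtain ⟨⟨hb, hcnt⟩, hd⟩ := h
  refine ⟨⟨fun i j => hb (e i) j, ?_⟩, ?_⟩
  · intro S hS x hx
    have hcard : (univ.filter fun i : ι' => ∀ j ∈ S, A (e i) j = x j).card
        = (univ.filter fun i : ι => ∀ j ∈ S, A i j = x j).card := by
      refine Finset.card_bij (fun i _ => e i) ?_ ?_ ?_
      · intro i hi
        simp only [mem_filter, mem_univ, true_and] at hi ⊢
        exact hi
      · intro i1 _ i2 _ hh
        exact e.injective hh
      · intro i hi
        refine ⟨e.symm i, ?_, by simp⟩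
        simp only [mem_filter, mem_univ, true_and, Equiv.apply_symm_apply] at hi ⊢
        exact hi
    rw [hcard, hcnt S hS x hx, Fintype.card_congr e]
  · intro i i' hne
    have : hamDist (fun i j => A (e i) j) i i' = hamDist A (e i) (e i') := rfl
    rw [this]
    exact hd (e i) (e i') (fun hh => hne (e.injective hh))

lemma irMOA_cols {κ' : Type*} [Fintype κ'] [DecidableEq κ'] (e : κ' ≃ κ)
    {A : ι → κ → ℕ} {lv : κ → ℕ} (h : IsIrMOA A lv 2) :
    IsIrMOA (fun i j' => A i (e j')) (fun j' => lv (e j')) 2 := by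
  obtain ⟨⟨hb, hcnt⟩, hd⟩ := h
  refine ⟨⟨fun i j => hb i (e j), ?_⟩, ?_⟩
  · intro S hS x hx
    have key := hcnt (S.map e.toEmbedding) (by simpa using hS) (fun j => x (e.symm j))
      (by
        intro j hj
        obtain ⟨j', hj', rfl⟩ := Finset.mem_map.mp hj
        simpa using hx j' hj')
    rw [Finset.prod_map] at key
    rw [← key]
    congr 2
    · apply Finset.filter_congr
      intro i _
      constructor
      · intro hh j hj
        obtain ⟨j', hj', rfl⟩ := Finset.mem_map.mp hj
        simpa using hh j' hj'
      · intro hh j' hj'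
        have := hh (e j') (Finset.mem_map_of_mem _ hj')
        simpa using this
  · intro i i' hne
    have : hamDist (fun i j' => A i (e j')) i i' = hamDist A i i' := by
      unfold hamDist
      refine Finset.card_bij (fun j _ => e j) ?_ ?_ ?_
      · intro j hj
        simpa using (Finset.mem_filter.mp hj).2
      · intro j1 _ j2 _ hh
        exact e.injective hh
      · intro j hj
        exact ⟨e.symm j, by simpa using (Finset.mem_filter.mp hj).2, by simp⟩
    rw [this]
    exact hd i i' hne


lemma irMOA_prod {ι1 ι2 κ1 κ2 : Type*} [Fintype ι1] [Fintype ι2] [Fintype κ1] [Fintype κ2]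
    [DecidableEq κ1] [DecidableEq κ2]
    {A : ι1 → κ1 → ℕ} {B : ι2 → κ2 → ℕ} {lv1 : κ1 → ℕ} {lv2 : κ2 → ℕ}
    (hA : IsIrMOA A lv1 2) (hB : IsIrMOA B lv2 2) :
    IsIrMOA (fun (p : ι1 × ι2) (j : κ1 ⊕ κ2) => Sum.elim (A p.1) (B p.2) j)
      (Sum.elim lv1 lv2) 2 := by
  obtain ⟨hAm, hAd⟩ := hA
  obtain ⟨hBm, hBd⟩ := hB
  constructor
  · apply isMOA_of_pairs
    · rintro ⟨i1, i2⟩ (j | j)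
      · exact hAm.1 i1 j
      · exact hBm.1 i2 j
    · rintro (j | j) x hx <;> simp only [Sum.elim_inl, Sum.elim_inr] at hx ⊢
      · erw [card_filter_fst (fun i1 => A i1 j = x)]
        have := moa_single hAm j x hx
        rw [Fintype.card_prod]
        calc (univ.filter fun i1 => A i1 j = x).card * Fintype.card ι2 * lv1 j
            = (univ.filter fun i1 => A i1 j = x).card * lv1 j * Fintype.card ι2 := by ring
          _ = Fintype.card ι1 * Fintype.card ι2 := by rw [this]
      · erw [card_filter_snd (fun i2 => B i2 j = x)]
        have := moa_single hBm j x hx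
        rw [Fintype.card_prod]
        calc Fintype.card ι1 * (univ.filter fun i2 => B i2 j = x).card * lv2 j
            = Fintype.card ι1 * ((univ.filter fun i2 => B i2 j = x).card * lv2 j) := by ring
          _ = Fintype.card ι1 * Fintype.card ι2 := by rw [this]
    · rintro (j | j) (j' | j') hne x x' hx hx' <;>
        simp only [Sum.elim_inl, Sum.elim_inr] at hx hx' ⊢
      · have hjj : j ≠ j' := fun hh => hne (by rw [hh])
        erw [card_filter_fst (β := ι2) (fun i1 => A i1 j = x ∧ A i1 j' = x')]
        have := moa_pair hAm hjj x x' hx hx'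
        rw [Fintype.card_prod]
        calc (univ.filter fun i1 => A i1 j = x ∧ A i1 j' = x').card * Fintype.card ι2 * (lv1 j * lv1 j')
            = (univ.filter fun i1 => A i1 j = x ∧ A i1 j' = x').card * (lv1 j * lv1 j') * Fintype.card ι2 := by ring
          _ = Fintype.card ι1 * Fintype.card ι2 := by rw [this]
      · erw [card_filter_and (fun i1 => A i1 j = x) (fun i2 => B i2 j' = x')]
        have h1 := moa_single hAm j x hx
        have h2 := moa_single hBm j' x' hx'
        rw [Fintype.card_prod]
        calc (univ.filter fun i1 => A i1 j = x).card * (univ.filter fun i2 => B i2 j' = x').card * (lv1 j * lv2 j')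
            = ((univ.filter fun i1 => A i1 j = x).card * lv1 j) * ((univ.filter fun i2 => B i2 j' = x').card * lv2 j') := by ring
          _ = Fintype.card ι1 * Fintype.card ι2 := by rw [h1, h2]
      · have : (univ.filter fun p : ι1 × ι2 => B p.2 j = x ∧ A p.1 j' = x')
            = univ.filter fun p : ι1 × ι2 => A p.1 j' = x' ∧ B p.2 j = x := by
          apply Finset.filter_congr; intro p _; simp [and_comm]
        erw [this, card_filter_and (fun i1 => A i1 j' = x') (fun i2 => B i2 j = x)]
        have h1 := moa_single hAm j' x' hx'
        have h2 := moa_single hBm j x hx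
        rw [Fintype.card_prod]
        calc (univ.filter fun i1 => A i1 j' = x').card * (univ.filter fun i2 => B i2 j = x).card * (lv2 j * lv1 j')
            = ((univ.filter fun i1 => A i1 j' = x').card * lv1 j') * ((univ.filter fun i2 => B i2 j = x).card * lv2 j) := by ring
          _ = Fintype.card ι1 * Fintype.card ι2 := by rw [h1, h2]
      · have hjj : j ≠ j' := fun hh => hne (by rw [hh])
        erw [card_filter_snd (α := ι1) (fun i2 => B i2 j = x ∧ B i2 j' = x')]
        have := moa_pair hBm hjj x x' hx hx'
        rw [Fintype.card_prod]
        calc Fintype.card ι1 * (univ.filter fun i2 => B i2 j = x ∧ B i2 j' = x').card * (lv2 j * lv2 j')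
            = Fintype.card ι1 * ((univ.filter fun i2 => B i2 j = x ∧ B i2 j' = x').card * (lv2 j * lv2 j')) := by ring
          _ = Fintype.card ι1 * Fintype.card ι2 := by rw [this]
  · rintro ⟨i1, i2⟩ ⟨i1', i2'⟩ hne
    have hsplit : hamDist (fun (p : ι1 × ι2) (j : κ1 ⊕ κ2) => Sum.elim (A p.1) (B p.2) j) (i1, i2) (i1', i2')
        = hamDist A i1 i1' + hamDist B i2 i2' := by
      unfold hamDist
      exact card_filter_sum _
    rw [hsplit]
    rcases eq_or_ne i1 i1' with rfl | h
    · have h2 : i2 ≠ i2' := fun hh => hne (by rw [hh])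
      calc 3 ≤ hamDist B i2 i2' := hBd i2 i2' h2
        _ ≤ _ := Nat.le_add_left _ _
    · calc 3 ≤ hamDist A i1 i1' := hAd i1 i1' h
        _ ≤ _ := Nat.le_add_right _ _
lemma one_le_card_filter {α : Type*} [Fintype α] {p : α → Prop} [DecidablePred p]
    {j1 : α} (h1 : p j1) : 1 ≤ (univ.filter p).card :=
  Finset.card_pos.mpr ⟨j1, Finset.mem_filter.mpr ⟨Finset.mem_univ _, h1⟩⟩

lemma two_le_card_filter {α : Type*} [Fintype α] [DecidableEq α] {p : α → Prop}
    [DecidablePred p] {j1 j2 : α} (h12 : j1 ≠ j2) (h1 : p j1) (h2 : p j2) :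
    2 ≤ (univ.filter p).card := by
  have hsub : ({j1, j2} : Finset α) ⊆ univ.filter p := by
    intro t ht
    rcases Finset.mem_insert.mp ht with rfl | ht
    · exact Finset.mem_filter.mpr ⟨Finset.mem_univ _, h1⟩
    · rcases Finset.mem_singleton.mp ht with rfl
      exact Finset.mem_filter.mpr ⟨Finset.mem_univ _, h2⟩
  calc 2 = ({j1, j2} : Finset α).card := (Finset.card_pair h12).symm
    _ ≤ _ := Finset.card_le_card hsub

lemma three_le_card_filter {α : Type*} [Fintype α] [DecidableEq α] {p : α → Prop}
    [DecidablePred p] {j1 j2 j3 : α} (h12 : j1 ≠ j2) (h13 : j1 ≠ j3) (h23 : j2 ≠ j3)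
    (h1 : p j1) (h2 : p j2) (h3 : p j3) :
    3 ≤ (univ.filter p).card := by
  have hsub : ({j1, j2, j3} : Finset α) ⊆ univ.filter p := by
    intro t ht
    rcases Finset.mem_insert.mp ht with rfl | ht
    · exact Finset.mem_filter.mpr ⟨Finset.mem_univ _, h1⟩
    · rcases Finset.mem_insert.mp ht with rfl | ht
      · exact Finset.mem_filter.mpr ⟨Finset.mem_univ _, h2⟩
      · rcases Finset.mem_singleton.mp ht with rfl
        exact Finset.mem_filter.mpr ⟨Finset.mem_univ _, h3⟩
  have hc3 : ({j1, j2, j3} : Finset α).card = 3 := by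
    rw [Finset.card_insert_of_notMem (by simp [h12, h13]), Finset.card_pair h23]
  calc 3 = ({j1, j2, j3} : Finset α).card := hc3.symm
    _ ≤ _ := Finset.card_le_card hsub

lemma zmod2_sub_comm (a b : ZMod 2) : a - b = b - a := by
  rw [CharTwo.sub_eq_add, CharTwo.sub_eq_add, add_comm]

lemma zmod3_order (x x' : ZMod 3) (h : x ≠ x') :
    (x.val < x'.val ∧ x = x ∧ x' = x') ∨ (x'.val < x.val) := by
  rcases lt_trichotomy x.val x'.val with hh | hh | hh
  · exact Or.inl ⟨hh, rfl, rfl⟩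
  · exact absurd (ZMod.val_injective 3 hh) h
  · exact Or.inr hh
lemma add_shift_iff {G : Type*} [AddCommGroup G] (z w t : G) : z + w = t ↔ w = t - z := by
  rw [add_comm]
  exact eq_sub_iff_add_eq.symm

def cosetArr {a m R : ℕ} (B : Fin R → Fin m → ZMod 2) (g : Fin a → ZMod 3 → Fin m → ZMod 2) :
    ((Fin a → ZMod 3) × Fin R) → (Fin a ⊕ Fin m) → ℕ :=
  fun p => Sum.elim (fun i => (p.1 i).val) (fun j => ((∑ i, g i (p.1 i) j) + B p.2 j).val)

lemma coset_irMOA {a m R : ℕ} (B : Fin R → Fin m → ZMod 2) (g : Fin a → ZMod 3 → Fin m → ZMod 2)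
    (W : Fin R → Fin R → Fin R)
    (hb1 : ∀ j : Fin m, ∀ y : ZMod 2,
      (univ.filter fun s : Fin R => B s j = y).card * 2 = R)
    (hb2 : ∀ j j' : Fin m, j < j' → ∀ y y' : ZMod 2,
      (univ.filter fun s : Fin R => B s j = y ∧ B s j' = y').card * 4 = R)
    (hT1 : ∀ i : Fin a, ∀ x : ZMod 3,
      (univ.filter fun u : Fin a → ZMod 3 => u i = x).card * 3 = 3 ^ a)
    (hT2 : ∀ i i' : Fin a, i ≠ i' → ∀ x x' : ZMod 3,
      (univ.filter fun u : Fin a → ZMod 3 => u i = x ∧ u i' = x').card * 9 = 3 ^ a)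
    (hcl : ∀ s s' : Fin R, ∀ j, B s j - B s' j = B (W s s') j)
    (hne0 : ∀ s s' : Fin R, s < s' → ∃ j : Fin m, B s j ≠ B s' j)
    (hwt3 : ∀ t : Fin R, (∃ j, B t j ≠ 0) → ∃ j1, B t j1 ≠ 0 ∧ ∃ j2, B t j2 ≠ 0 ∧ j1 ≠ j2 ∧
      ∃ j3, B t j3 ≠ 0 ∧ j1 ≠ j3 ∧ j2 ≠ j3)
    (hd1 : ∀ i : Fin a, ∀ x x' : ZMod 3, x.val < x'.val → ∀ s : Fin R,
      ∃ j1, g i x j1 - g i x' j1 + B s j1 ≠ 0 ∧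
        ∃ j2, g i x j2 - g i x' j2 + B s j2 ≠ 0 ∧ j1 ≠ j2)
    (hd2 : ∀ i i' : Fin a, i < i' → ∀ x x' y y' : ZMod 3, x.val < x'.val → y.val < y'.val →
      ∀ s : Fin R, ∃ j : Fin m,
        g i x j - g i x' j + (g i' y j - g i' y' j) + B s j ≠ 0) :
    IsIrMOA (cosetArr B g) (Sum.elim (fun _ => 3) fun _ => 2) 2 := by
  have hcardU : Fintype.card (Fin a → ZMod 3) = 3 ^ a := by
    rw [Fintype.card_fun, ZMod.card, Fintype.card_fin]
  have hcard : Fintype.card ((Fin a → ZMod 3) × Fin R) = 3 ^ a * R := by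
    rw [Fintype.card_prod, hcardU, Fintype.card_fin]
  constructor
  · apply isMOA_of_pairs
    · rintro ⟨u, s⟩ (i | j) <;> simp only [cosetArr, Sum.elim_inl, Sum.elim_inr]
      · exact ZMod.val_lt (u i)
      · exact ZMod.val_lt _
    · rintro (i | j) x hx <;> simp only [Sum.elim_inl, Sum.elim_inr] at hx ⊢
      · have heq : (univ.filter fun p : (Fin a → ZMod 3) × Fin R => cosetArr B g p (Sum.inl i) = x)
            = univ.filter fun p : (Fin a → ZMod 3) × Fin R => p.1 i = (x : ZMod 3) := by
          refine Finset.filter_congr fun p _ => ?_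
          simp only [cosetArr, Sum.elim_inl]
          exact zval_eq_iff (p.1 i) x hx
        rw [heq, card_filter_fst (α := Fin a → ZMod 3) (β := Fin R)
          (fun u => u i = (x : ZMod 3)), hcard,
          Fintype.card_fin]
        have h1 := hT1 i (x : ZMod 3)
        calc (univ.filter fun u : Fin a → ZMod 3 => u i = (x : ZMod 3)).card * R * 3
            = (univ.filter fun u : Fin a → ZMod 3 => u i = (x : ZMod 3)).card * 3 * R := by ring
          _ = 3 ^ a * R := by rw [h1]
      · rw [card_filter_prod, hcard]
        have hsum : ∀ u : Fin a → ZMod 3,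
            (univ.filter fun s : Fin R => cosetArr B g (u, s) (Sum.inr j) = x).card * 2 = R := by
          intro u
          have heq : (univ.filter fun s : Fin R => cosetArr B g (u, s) (Sum.inr j) = x)
              = univ.filter fun s : Fin R => B s j = (x : ZMod 2) - ∑ i, g i (u i) j := by
            refine Finset.filter_congr fun s _ => ?_
            simp only [cosetArr, Sum.elim_inr]
            rw [zval_eq_iff _ x hx]
            exact add_shift_iff _ _ _
          rw [heq]
          exact hb1 j _
        calc (∑ u : Fin a → ZMod 3,
              (univ.filter fun s : Fin R => cosetArr B g (u, s) (Sum.inr j) = x).card) * 2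
            = ∑ u : Fin a → ZMod 3,
              (univ.filter fun s : Fin R => cosetArr B g (u, s) (Sum.inr j) = x).card * 2 :=
              Finset.sum_mul ..
          _ = ∑ _u : Fin a → ZMod 3, R := Finset.sum_congr rfl fun u _ => hsum u
          _ = 3 ^ a * R := by rw [Finset.sum_const, Finset.card_univ, hcardU, smul_eq_mul]
    · rintro (i | j) (i' | j') hne x x' hx hx' <;>
        simp only [Sum.elim_inl, Sum.elim_inr] at hx hx' ⊢
      · have hii : i ≠ i' := fun hh => hne (by rw [hh])
        have heq : (univ.filter fun p : (Fin a → ZMod 3) × Fin R =>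
              cosetArr B g p (Sum.inl i) = x ∧ cosetArr B g p (Sum.inl i') = x')
            = univ.filter fun p : (Fin a → ZMod 3) × Fin R =>
              p.1 i = (x : ZMod 3) ∧ p.1 i' = (x' : ZMod 3) := by
          refine Finset.filter_congr fun p _ => ?_
          simp only [cosetArr, Sum.elim_inl]
          rw [zval_eq_iff _ x hx, zval_eq_iff _ x' hx']
        rw [heq, card_filter_fst (α := Fin a → ZMod 3) (β := Fin R)
          (fun u => u i = (x : ZMod 3) ∧ u i' = (x' : ZMod 3)), hcard, Fintype.card_fin]
        have h2 := hT2 i i' hii (x : ZMod 3) (x' : ZMod 3)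
        calc (univ.filter fun u : Fin a → ZMod 3 =>
              u i = (x : ZMod 3) ∧ u i' = (x' : ZMod 3)).card * R * (3 * 3)
            = (univ.filter fun u : Fin a → ZMod 3 =>
              u i = (x : ZMod 3) ∧ u i' = (x' : ZMod 3)).card * 9 * R := by ring
          _ = 3 ^ a * R := by rw [h2]
      · -- inl i, inr j'
        rw [card_filter_prod, hcard]
        have hkey : ∀ u : Fin a → ZMod 3,
            (univ.filter fun s : Fin R => cosetArr B g (u, s) (Sum.inl i) = x ∧
              cosetArr B g (u, s) (Sum.inr j') = x').card * 2
            = (if u i = (x : ZMod 3) then R else 0) := by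
          intro u
          by_cases hu : u i = (x : ZMod 3)
          · rw [if_pos hu]
            have heq : (univ.filter fun s : Fin R => cosetArr B g (u, s) (Sum.inl i) = x ∧
                  cosetArr B g (u, s) (Sum.inr j') = x')
                = univ.filter fun s : Fin R => B s j' = (x' : ZMod 2) - ∑ t, g t (u t) j' := by
              refine Finset.filter_congr fun s _ => ?_
              simp only [cosetArr, Sum.elim_inl, Sum.elim_inr]
              rw [zval_eq_iff _ x hx, zval_eq_iff _ x' hx']
              simp only [hu, true_and]
              exact add_shift_iff _ _ _
            rw [heq]
            exact hb1 j' _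
          · rw [if_neg hu]
            have heq : (univ.filter fun s : Fin R => cosetArr B g (u, s) (Sum.inl i) = x ∧
                  cosetArr B g (u, s) (Sum.inr j') = x') = ∅ := by
              refine Finset.filter_false_of_mem fun s _ => ?_
              simp only [cosetArr, Sum.elim_inl]
              rw [zval_eq_iff _ x hx]
              exact fun hc => hu hc.1
            rw [heq]
            simp
        calc (∑ u : Fin a → ZMod 3,
              (univ.filter fun s : Fin R => cosetArr B g (u, s) (Sum.inl i) = x ∧
                cosetArr B g (u, s) (Sum.inr j') = x').card) * (3 * 2)
            = ((∑ u : Fin a → ZMod 3,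
              (univ.filter fun s : Fin R => cosetArr B g (u, s) (Sum.inl i) = x ∧
                cosetArr B g (u, s) (Sum.inr j') = x').card) * 2) * 3 := by ring
          _ = (∑ u : Fin a → ZMod 3,
              (univ.filter fun s : Fin R => cosetArr B g (u, s) (Sum.inl i) = x ∧
                cosetArr B g (u, s) (Sum.inr j') = x').card * 2) * 3 := by
              rw [Finset.sum_mul]
          _ = (∑ u : Fin a → ZMod 3, if u i = (x : ZMod 3) then R else 0) * 3 := by
              rw [Finset.sum_congr rfl fun u _ => hkey u]
          _ = (univ.filter fun u : Fin a → ZMod 3 => u i = (x : ZMod 3)).card * R * 3 := by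
              rw [Finset.sum_ite, Finset.sum_const, Finset.sum_const_zero, add_zero,
                smul_eq_mul]
          _ = (univ.filter fun u : Fin a → ZMod 3 => u i = (x : ZMod 3)).card * 3 * R := by ring
          _ = 3 ^ a * R := by rw [hT1 i (x : ZMod 3)]
      · -- inr j, inl i'
        rw [card_filter_prod, hcard]
        have hkey : ∀ u : Fin a → ZMod 3,
            (univ.filter fun s : Fin R => cosetArr B g (u, s) (Sum.inr j) = x ∧
              cosetArr B g (u, s) (Sum.inl i') = x').card * 2
            = (if u i' = (x' : ZMod 3) then R else 0) := by
          intro u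
          by_cases hu : u i' = (x' : ZMod 3)
          · rw [if_pos hu]
            have heq : (univ.filter fun s : Fin R => cosetArr B g (u, s) (Sum.inr j) = x ∧
                  cosetArr B g (u, s) (Sum.inl i') = x')
                = univ.filter fun s : Fin R => B s j = (x : ZMod 2) - ∑ t, g t (u t) j := by
              refine Finset.filter_congr fun s _ => ?_
              simp only [cosetArr, Sum.elim_inl, Sum.elim_inr]
              rw [zval_eq_iff _ x hx, zval_eq_iff _ x' hx']
              simp only [hu, and_true]
              exact add_shift_iff _ _ _
            rw [heq]
            exact hb1 j _
          · rw [if_neg hu]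
            have heq : (univ.filter fun s : Fin R => cosetArr B g (u, s) (Sum.inr j) = x ∧
                  cosetArr B g (u, s) (Sum.inl i') = x') = ∅ := by
              refine Finset.filter_false_of_mem fun s _ => ?_
              simp only [cosetArr, Sum.elim_inl]
              rw [zval_eq_iff _ x' hx']
              exact fun hc => hu hc.2
            rw [heq]
            simp
        calc (∑ u : Fin a → ZMod 3,
              (univ.filter fun s : Fin R => cosetArr B g (u, s) (Sum.inr j) = x ∧
                cosetArr B g (u, s) (Sum.inl i') = x').card) * (2 * 3)
            = ((∑ u : Fin a → ZMod 3,
              (univ.filter fun s : Fin R => cosetArr B g (u, s) (Sum.inr j) = x ∧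
                cosetArr B g (u, s) (Sum.inl i') = x').card) * 2) * 3 := by ring
          _ = (∑ u : Fin a → ZMod 3,
              (univ.filter fun s : Fin R => cosetArr B g (u, s) (Sum.inr j) = x ∧
                cosetArr B g (u, s) (Sum.inl i') = x').card * 2) * 3 := by
              rw [Finset.sum_mul]
          _ = (∑ u : Fin a → ZMod 3, if u i' = (x' : ZMod 3) then R else 0) * 3 := by
              rw [Finset.sum_congr rfl fun u _ => hkey u]
          _ = (univ.filter fun u : Fin a → ZMod 3 => u i' = (x' : ZMod 3)).card * R * 3 := by
              rw [Finset.sum_ite, Finset.sum_const, Finset.sum_const_zero, add_zero,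
                smul_eq_mul]
          _ = (univ.filter fun u : Fin a → ZMod 3 => u i' = (x' : ZMod 3)).card * 3 * R := by
              ring
          _ = 3 ^ a * R := by rw [hT1 i' (x' : ZMod 3)]
      · -- inr j, inr j'
        have hjj : j ≠ j' := fun hh => hne (by rw [hh])
        rw [card_filter_prod, hcard]
        have hkey : ∀ u : Fin a → ZMod 3,
            (univ.filter fun s : Fin R => cosetArr B g (u, s) (Sum.inr j) = x ∧
              cosetArr B g (u, s) (Sum.inr j') = x').card * 4 = R := by
          intro u
          have heq : (univ.filter fun s : Fin R => cosetArr B g (u, s) (Sum.inr j) = x ∧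
                cosetArr B g (u, s) (Sum.inr j') = x')
              = univ.filter fun s : Fin R => B s j = (x : ZMod 2) - ∑ t, g t (u t) j ∧
                B s j' = (x' : ZMod 2) - ∑ t, g t (u t) j' := by
            refine Finset.filter_congr fun s _ => ?_
            simp only [cosetArr, Sum.elim_inr]
            rw [zval_eq_iff _ x hx, zval_eq_iff _ x' hx']
            exact and_congr (add_shift_iff _ _ _) (add_shift_iff _ _ _)
          rw [heq]
          rcases hjj.lt_or_gt with hlt | hlt
          · exact hb2 j j' hlt _ _
          · have hsw : (univ.filter fun s : Fin R =>
                  B s j = (x : ZMod 2) - ∑ t, g t (u t) j ∧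
                  B s j' = (x' : ZMod 2) - ∑ t, g t (u t) j')
                = univ.filter fun s : Fin R =>
                  B s j' = (x' : ZMod 2) - ∑ t, g t (u t) j' ∧
                  B s j = (x : ZMod 2) - ∑ t, g t (u t) j := by
              apply Finset.filter_congr
              intro s _
              exact and_comm
            rw [hsw]
            exact hb2 j' j hlt _ _
        calc (∑ u : Fin a → ZMod 3,
              (univ.filter fun s : Fin R => cosetArr B g (u, s) (Sum.inr j) = x ∧
                cosetArr B g (u, s) (Sum.inr j') = x').card) * (2 * 2)
            = ∑ u : Fin a → ZMod 3,
              (univ.filter fun s : Fin R => cosetArr B g (u, s) (Sum.inr j) = x ∧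
                cosetArr B g (u, s) (Sum.inr j') = x').card * 4 := by
              rw [Finset.sum_mul]
          _ = ∑ _u : Fin a → ZMod 3, R := Finset.sum_congr rfl fun u _ => hkey u
          _ = 3 ^ a * R := by rw [Finset.sum_const, Finset.card_univ, hcardU, smul_eq_mul]
  · -- distance
    rintro ⟨u, s⟩ ⟨u', s'⟩ hne
    have hsplit : hamDist (cosetArr B g) (u, s) (u', s')
        = (univ.filter fun i : Fin a => u i ≠ u' i).card
          + (univ.filter fun j : Fin m =>
              (∑ i, g i (u i) j) + B s j ≠ (∑ i, g i (u' i) j) + B s' j).card := by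
      unfold hamDist
      rw [card_filter_sum]
      congr 1
      · refine congrArg Finset.card (Finset.filter_congr fun i _ => ?_)
        simp only [cosetArr, Sum.elim_inl]
        exact (ZMod.val_injective 3).ne_iff
      · refine congrArg Finset.card (Finset.filter_congr fun j _ => ?_)
        simp only [cosetArr, Sum.elim_inr]
        exact (ZMod.val_injective 2).ne_iff
    rcases eq_or_ne u u' with rfl | huu
    · have hss : s ≠ s' := fun hh => hne (by rw [hh])
      have heq : (univ.filter fun j : Fin m =>
            (∑ i, g i (u i) j) + B s j ≠ (∑ i, g i (u i) j) + B s' j).card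
          = (univ.filter fun j : Fin m => B s j ≠ B s' j).card := by
        refine congrArg Finset.card (Finset.filter_congr fun j _ => ?_)
        exact not_congr (add_right_inj _)
      rw [hsplit, heq]
      have hiff : ∀ j : Fin m, (B s j ≠ B s' j) ↔ B (W s s') j ≠ 0 := by
        intro j
        have h1 : (B s j ≠ B s' j) ↔ (B s j - B s' j ≠ 0) := sub_ne_zero.symm
        rw [hcl s s' j] at h1
        exact h1
      have hj0 : ∃ j : Fin m, B s j ≠ B s' j := by
        rcases hss.lt_or_gt with hlt | hlt
        · exact hne0 s s' hlt
        · obtain ⟨j, hj⟩ := hne0 s' s hlt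
          exact ⟨j, Ne.symm hj⟩
      obtain ⟨j0, hj0'⟩ := hj0
      obtain ⟨j1, p1, j2, p2, h12, j3, p3, h13, h23⟩ := hwt3 (W s s') ⟨j0, (hiff j0).mp hj0'⟩
      have := three_le_card_filter (p := fun j : Fin m => B s j ≠ B s' j)
        h12 h13 h23 ((hiff j1).mpr p1) ((hiff j2).mpr p2) ((hiff j3).mpr p3)
      omega
    · have hs'' : ∀ j, B s j - B s' j = B (W s s') j := hcl s s'
      set s'' := W s s' with hsdef
      have hnorm : ∀ (i : Fin a) (w w' : ZMod 3), w ≠ w' → ∃ v v' : ZMod 3,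
          v.val < v'.val ∧ ∀ j : Fin m, g i w j - g i w' j = g i v j - g i v' j := by
        intro i w w' hww
        rcases zmod3_order w w' hww with ⟨hlt, -, -⟩ | hlt
        · exact ⟨w, w', hlt, fun j => rfl⟩
        · exact ⟨w', w, hlt, fun j => zmod2_sub_comm _ _⟩
      have hbinshape : ∀ j : Fin m,
          ((∑ i, g i (u i) j) + B s j ≠ (∑ i, g i (u' i) j) + B s' j)
          ↔ ((∑ i ∈ univ.filter fun i => u i ≠ u' i,
              (g i (u i) j - g i (u' i) j)) + B s'' j ≠ 0) := by
        intro j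
        rw [← sub_ne_zero]
        have hveq : ((∑ i, g i (u i) j) + B s j) - ((∑ i, g i (u' i) j) + B s' j)
            = (∑ i ∈ univ.filter fun i => u i ≠ u' i,
                (g i (u i) j - g i (u' i) j)) + B s'' j := by
          have hsub : (∑ i ∈ univ.filter fun i => u i ≠ u' i,
              (g i (u i) j - g i (u' i) j)) = ∑ i, (g i (u i) j - g i (u' i) j) := by
            refine Finset.sum_subset (Finset.filter_subset _ _) fun i _ hi => ?_
            have hieq : u i = u' i := by
              by_contra hcc
              exact hi (Finset.mem_filter.mpr ⟨Finset.mem_univ i, hcc⟩)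
            rw [hieq, sub_self]
          rw [hsub, ← hs'' j, Finset.sum_sub_distrib]
          ring
        rw [hveq]
      have hbin : (univ.filter fun j : Fin m =>
            (∑ i, g i (u i) j) + B s j ≠ (∑ i, g i (u' i) j) + B s' j).card
          = (univ.filter fun j : Fin m =>
            (∑ i ∈ univ.filter fun i => u i ≠ u' i,
              (g i (u i) j - g i (u' i) j)) + B s'' j ≠ 0).card :=
        congrArg Finset.card (Finset.filter_congr fun j _ => hbinshape j)
      have hDpos : 0 < (univ.filter fun i : Fin a => u i ≠ u' i).card := by
        obtain ⟨i0, hi0⟩ := Function.ne_iff.mp huu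
        exact Finset.card_pos.mpr ⟨i0, Finset.mem_filter.mpr ⟨Finset.mem_univ i0, hi0⟩⟩
      rw [hsplit, hbin]
      obtain hc1 | hc2 | hc3 : (univ.filter fun i : Fin a => u i ≠ u' i).card = 1 ∨
          (univ.filter fun i : Fin a => u i ≠ u' i).card = 2 ∨
          3 ≤ (univ.filter fun i : Fin a => u i ≠ u' i).card := by omega
      · obtain ⟨i0, hD⟩ := Finset.card_eq_one.mp hc1
        have hi0 : u i0 ≠ u' i0 := by
          have : i0 ∈ univ.filter fun i : Fin a => u i ≠ u' i := by
            rw [hD]; exact Finset.mem_singleton_self i0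
          exact (Finset.mem_filter.mp this).2
        have hsum1 : ∀ j, (∑ i ∈ univ.filter fun i => u i ≠ u' i,
            (g i (u i) j - g i (u' i) j)) = g i0 (u i0) j - g i0 (u' i0) j := by
          intro j; rw [hD, Finset.sum_singleton]
        have hcc : (univ.filter fun j : Fin m =>
              (∑ i ∈ univ.filter fun i => u i ≠ u' i,
                (g i (u i) j - g i (u' i) j)) + B s'' j ≠ 0).card
            = (univ.filter fun j : Fin m =>
              g i0 (u i0) j - g i0 (u' i0) j + B s'' j ≠ 0).card := by
          refine congrArg Finset.card (Finset.filter_congr fun j _ => ?_)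
          rw [hsum1 j]
        rw [hcc, hc1]
        obtain ⟨v, v', hv, he⟩ := hnorm i0 (u i0) (u' i0) hi0
        obtain ⟨j1, q1, j2, q2, h12⟩ := hd1 i0 v v' hv s''
        have h2c := two_le_card_filter
          (p := fun j : Fin m => g i0 (u i0) j - g i0 (u' i0) j + B s'' j ≠ 0)
          h12
          (by show g i0 (u i0) j1 - g i0 (u' i0) j1 + B s'' j1 ≠ 0; rw [he j1]; exact q1)
          (by show g i0 (u i0) j2 - g i0 (u' i0) j2 + B s'' j2 ≠ 0; rw [he j2]; exact q2)
        omega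
      · obtain ⟨i0, i1, hne01, hD⟩ := Finset.card_eq_two.mp hc2
        have hi0 : u i0 ≠ u' i0 := by
          have : i0 ∈ univ.filter fun i : Fin a => u i ≠ u' i := by rw [hD]; simp
          exact (Finset.mem_filter.mp this).2
        have hi1 : u i1 ≠ u' i1 := by
          have : i1 ∈ univ.filter fun i : Fin a => u i ≠ u' i := by rw [hD]; simp
          exact (Finset.mem_filter.mp this).2
        have hcc : (univ.filter fun j : Fin m =>
              (∑ i ∈ univ.filter fun i => u i ≠ u' i,
                (g i (u i) j - g i (u' i) j)) + B s'' j ≠ 0).card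
            = (univ.filter fun j : Fin m =>
              g i0 (u i0) j - g i0 (u' i0) j + (g i1 (u i1) j - g i1 (u' i1) j) + B s'' j ≠ 0).card := by
          refine congrArg Finset.card (Finset.filter_congr fun j _ => ?_)
          rw [hD, Finset.sum_pair hne01]
        rw [hcc, hc2]
        obtain ⟨vA, vA', hvA, heA⟩ := hnorm i0 (u i0) (u' i0) hi0
        obtain ⟨vB, vB', hvB, heB⟩ := hnorm i1 (u i1) (u' i1) hi1
        have h1c : 1 ≤ (univ.filter fun j : Fin m =>
            g i0 (u i0) j - g i0 (u' i0) j + (g i1 (u i1) j - g i1 (u' i1) j) + B s'' j ≠ 0).card := by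
          rcases hne01.lt_or_gt with hlt | hlt
          · obtain ⟨j, hj⟩ := hd2 i0 i1 hlt vA vA' vB vB' hvA hvB s''
            refine one_le_card_filter (j1 := j) ?_
            show g i0 (u i0) j - g i0 (u' i0) j + (g i1 (u i1) j - g i1 (u' i1) j) + B s'' j ≠ 0
            rw [heA j, heB j]
            exact hj
          · obtain ⟨j, hj⟩ := hd2 i1 i0 hlt vB vB' vA vA' hvB hvA s''
            refine one_le_card_filter (j1 := j) ?_
            show g i0 (u i0) j - g i0 (u' i0) j + (g i1 (u i1) j - g i1 (u' i1) j) + B s'' j ≠ 0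
            rw [heA j, heB j]
            intro h0
            apply hj
            rw [← h0]
            ring
        omega
      · omega
lemma count_pi_one {a : ℕ} (i : Fin a) (x : ZMod 3) :
    (univ.filter fun u : Fin a → ZMod 3 => u i = x).card * 3 = 3 ^ a := by
  have hfib : ∀ x' : ZMod 3, (univ.filter fun u : Fin a → ZMod 3 => u i = x').card
      = (univ.filter fun u : Fin a → ZMod 3 => u i = x).card := by
    intro x'
    refine Finset.card_bij (fun u _ => Function.update u i x) ?_ ?_ ?_
    · intro u _
      simp [Function.update_self]
    · intro u hu v hv h
      have hu' := (Finset.mem_filter.mp hu).2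
      have hv' := (Finset.mem_filter.mp hv).2
      funext t
      by_cases ht : t = i
      · subst ht; rw [hu', hv']
      · have := congrFun h t
        simpa [Function.update_of_ne ht] using this
    · intro v hv
      have hv' := (Finset.mem_filter.mp hv).2
      refine ⟨Function.update v i x', by simp [Function.update_self], ?_⟩
      show _ = _
      funext t
      by_cases ht : t = i
      · subst ht; simp [Function.update_self, hv']
      · simp [Function.update_of_ne ht]
  have hsum := Finset.card_eq_sum_card_fiberwise
    (f := fun u : Fin a → ZMod 3 => u i) (s := univ) (t := univ) (fun _ _ => mem_univ _)
  rw [Finset.card_univ, Fintype.card_fun, ZMod.card, Fintype.card_fin] at hsum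
  rw [Finset.sum_congr rfl (fun x' _ => hfib x'), Finset.sum_const, Finset.card_univ,
    ZMod.card, smul_eq_mul] at hsum
  rw [mul_comm]
  exact hsum.symm

lemma count_pi_two {a : ℕ} (i i' : Fin a) (hii : i ≠ i') (x x' : ZMod 3) :
    (univ.filter fun u : Fin a → ZMod 3 => u i = x ∧ u i' = x').card * 9 = 3 ^ a := by
  have hfib : ∀ y : ZMod 3 × ZMod 3,
      (univ.filter fun u : Fin a → ZMod 3 => u i = y.1 ∧ u i' = y.2).card
      = (univ.filter fun u : Fin a → ZMod 3 => u i = x ∧ u i' = x').card := by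
    rintro ⟨y1, y2⟩
    refine Finset.card_bij (fun u _ => Function.update (Function.update u i x) i' x') ?_ ?_ ?_
    · intro u _
      simp only [mem_filter, mem_univ, true_and]
      constructor
      · rw [Function.update_of_ne hii, Function.update_self]
      · rw [Function.update_self]
    · intro u hu v hv h
      have hu' := (Finset.mem_filter.mp hu).2
      have hv' := (Finset.mem_filter.mp hv).2
      funext t
      by_cases ht : t = i
      · subst ht; rw [hu'.1, hv'.1]
      · by_cases ht' : t = i'
        · subst ht'; rw [hu'.2, hv'.2]
        · have := congrFun h t
          simpa [Function.update_of_ne ht, Function.update_of_ne ht'] using this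
    · intro v hv
      have hv' := (Finset.mem_filter.mp hv).2
      refine ⟨Function.update (Function.update v i y1) i' y2, ?_, ?_⟩
      · simp only [mem_filter, mem_univ, true_and]
        constructor
        · rw [Function.update_of_ne hii, Function.update_self]
        · rw [Function.update_self]
      · show _ = _
        funext t
        by_cases ht : t = i
        · subst ht
          rw [Function.update_of_ne hii, Function.update_self]
          exact hv'.1.symm
        · by_cases ht' : t = i'
          · subst ht'
            rw [Function.update_self]
            exact hv'.2.symm
          · simp [Function.update_of_ne ht, Function.update_of_ne ht']
  have hsum := Finset.card_eq_sum_card_fiberwise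
    (f := fun u : Fin a → ZMod 3 => (u i, u i')) (s := univ) (t := univ) (fun _ _ => mem_univ _)
  rw [Finset.card_univ, Fintype.card_fun, ZMod.card, Fintype.card_fin] at hsum
  have hcg : ∀ y ∈ (univ : Finset (ZMod 3 × ZMod 3)),
      (univ.filter fun u : Fin a → ZMod 3 => (u i, u i') = y).card
      = (univ.filter fun u : Fin a → ZMod 3 => u i = x ∧ u i' = x').card := by
    intro y _
    rw [← hfib y]
    refine congrArg Finset.card (Finset.filter_congr fun u _ => ?_)
    exact Prod.mk.injEq _ _ _ _ ▸ Iff.rfl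
  rw [Finset.sum_congr rfl hcg, Finset.sum_const, Finset.card_univ, Fintype.card_prod,
    ZMod.card, smul_eq_mul] at hsum
  calc (univ.filter fun u : Fin a → ZMod 3 => u i = x ∧ u i' = x').card * 9
      = 3 * 3 * (univ.filter fun u : Fin a → ZMod 3 => u i = x ∧ u i' = x').card := by ring
    _ = 3 ^ a := hsum.symm
def Ex (a N : ℕ) : Prop :=
  ∃ (r : ℕ) (C : Fin r → (Fin a ⊕ Fin N) → ℕ),
    0 < r ∧ IsIrMOA C (Sum.elim (fun _ => 3) fun _ => 2) 2

lemma ex_of_coset {a m R : ℕ} (hR : 0 < R)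
    (B : Fin R → Fin m → ZMod 2) (g : Fin a → ZMod 3 → Fin m → ZMod 2)
    (W : Fin R → Fin R → Fin R)
    (hb1 : ∀ j : Fin m, ∀ y : ZMod 2,
      (univ.filter fun s : Fin R => B s j = y).card * 2 = R)
    (hb2 : ∀ j j' : Fin m, j < j' → ∀ y y' : ZMod 2,
      (univ.filter fun s : Fin R => B s j = y ∧ B s j' = y').card * 4 = R)
    (hcl : ∀ s s' : Fin R, ∀ j, B s j - B s' j = B (W s s') j)
    (hne0 : ∀ s s' : Fin R, s < s' → ∃ j : Fin m, B s j ≠ B s' j)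
    (hwt3 : ∀ t : Fin R, (∃ j, B t j ≠ 0) → ∃ j1, B t j1 ≠ 0 ∧ ∃ j2, B t j2 ≠ 0 ∧ j1 ≠ j2 ∧
      ∃ j3, B t j3 ≠ 0 ∧ j1 ≠ j3 ∧ j2 ≠ j3)
    (hd1 : ∀ i : Fin a, ∀ x x' : ZMod 3, x.val < x'.val → ∀ s : Fin R,
      ∃ j1, g i x j1 - g i x' j1 + B s j1 ≠ 0 ∧
        ∃ j2, g i x j2 - g i x' j2 + B s j2 ≠ 0 ∧ j1 ≠ j2)
    (hd2 : ∀ i i' : Fin a, i < i' → ∀ x x' y y' : ZMod 3, x.val < x'.val → y.val < y'.val →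
      ∀ s : Fin R, ∃ j : Fin m,
        g i x j - g i x' j + (g i' y j - g i' y' j) + B s j ≠ 0) :
    Ex a m := by
  have h := coset_irMOA B g W hb1 hb2 (fun i x => count_pi_one i x)
    (fun i i' hii x x' => count_pi_two i i' hii x x') hcl hne0 hwt3 hd1 hd2
  have hc : Fintype.card ((Fin a → ZMod 3) × Fin R) = 3 ^ a * R := by
    rw [Fintype.card_prod, Fintype.card_fun, ZMod.card, Fintype.card_fin, Fintype.card_fin]
  refine ⟨3 ^ a * R, fun r j => cosetArr B g ((Fintype.equivFinOfCardEq hc).symm r) j,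
    Nat.mul_pos (Nat.pow_pos (n := a) (by norm_num)) hR, ?_⟩
  exact irMOA_rows ((Fintype.equivFinOfCardEq hc).symm) h

lemma Ex.add {a1 N1 a2 N2 : ℕ} (h1 : Ex a1 N1) (h2 : Ex a2 N2) :
    Ex (a1 + a2) (N1 + N2) := by
  obtain ⟨r1, C1, hr1, hC1⟩ := h1
  obtain ⟨r2, C2, hr2, hC2⟩ := h2
  have hprod := irMOA_prod hC1 hC2
  let e : (Fin (a1 + a2) ⊕ Fin (N1 + N2)) ≃ ((Fin a1 ⊕ Fin N1) ⊕ (Fin a2 ⊕ Fin N2)) :=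
    (Equiv.sumCongr finSumFinEquiv.symm finSumFinEquiv.symm).trans
      (Equiv.sumSumSumComm (Fin a1) (Fin a2) (Fin N1) (Fin N2))
  have hcols := irMOA_cols e hprod
  have hlv : (fun j' => Sum.elim (Sum.elim (fun _ => (3:ℕ)) fun _ => 2)
      (Sum.elim (fun _ => (3:ℕ)) fun _ => 2) (e j'))
      = (Sum.elim (fun _ => (3:ℕ)) fun _ => 2) := by
    funext j'
    rcases j' with t | t
    · rcases h : finSumFinEquiv.symm t with w | w <;>
        simp [e, Equiv.sumSumSumComm, h]
    · rcases h : finSumFinEquiv.symm t with w | w <;>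
        simp [e, Equiv.sumSumSumComm, h]
  rw [hlv] at hcols
  have hrows := irMOA_rows (finProdFinEquiv.symm : Fin (r1 * r2) ≃ Fin r1 × Fin r2) hcols
  exact ⟨r1 * r2, _, Nat.mul_pos hr1 hr2, hrows⟩

def mkB (m R NB : ℕ) : Fin R → Fin m → ZMod 2 :=
  fun s j => if NB.testBit (s.1 * m + j.1) then 1 else 0

def mkG (m a NG : ℕ) : Fin a → ZMod 3 → Fin m → ZMod 2 :=
  fun i x j => if NG.testBit ((i.1 * 3 + x.val) * m + j.1) then 1 else 0

def mkW (R NW : ℕ) (hR : 0 < R) : Fin R → Fin R → Fin R :=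
  fun s s' => ⟨(NW >>> ((s.1 * R + s'.1) * 8)) % 256 % R,
    Nat.lt_of_lt_of_le (Nat.mod_lt _ hR) (le_refl R)⟩
set_option maxHeartbeats 1600000

lemma ex0_6 : Ex 0 6 :=
  ex_of_coset (R := 8) (by norm_num) (mkB 6 8 163514545052544) (mkG 6 0 0)
    (mkW 8 206194662513534729730481158737807213776021836059274103282146702500433485186535872849793590575591282933792946137778369595008144024641618841507228418304 (by norm_num))
    (by decide) (by decide) (by decide) (by decide) (by decide) (by decide)
    (by decide)

lemma ex0_7 : Ex 0 7 :=
  ex_of_coset (R := 8) (by norm_num) (mkB 7 8 57950152701464320) (mkG 7 0 0)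
    (mkW 8 206194662513534729730481158737807213776021836059274103282146702500433485186535872849793590575591282933792946137778369595008144024641618841507228418304 (by norm_num))
    (by decide) (by decide) (by decide) (by decide) (by decide) (by decide)
    (by decide)

lemma ex0_8 : Ex 0 8 :=
  ex_of_coset (R := 16) (by norm_num) (mkB 8 16 52768754028364822396657952421428040960) (mkG 8 0 0)
    (mkW 16 496993557421161204163243009437446391341653336608304271121624660059905867430163053355368395320041430610534700094309787116316333372838869717123765844721104342294587954322015398860196881683994934575614081961872803318178738316981054947853411383614578266380302840988205566076747751023339533914336273646258426117987245021974221839422202745284332023813094186765912299314348206244604623940921211206220517801947762098578913983748402913545583850532858285115183840601263391889338249009225427263213881981981433387744120610570753766917016974680055602181339108998778753929667874397155454590095032613141351110587896698180337920 (by norm_num))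
    (by decide) (by decide) (by decide) (by decide) (by decide) (by decide)
    (by decide)

lemma ex0_9 : Ex 0 9 :=
  ex_of_coset (R := 16) (by norm_num) (mkB 9 16 1713912679220794000384400923924889315650048) (mkG 9 0 0)
    (mkW 16 496993557421161204163243009437446391341653336608304271121624660059905867430163053355368395320041430610534700094309787116316333372838869717123765844721104342294587954322015398860196881683994934575614081961872803318178738316981054947853411383614578266380302840988205566076747751023339533914336273646258426117987245021974221839422202745284332023813094186765912299314348206244604623940921211206220517801947762098578913983748402913545583850532858285115183840601263391889338249009225427263213881981981433387744120610570753766917016974680055602181339108998778753929667874397155454590095032613141351110587896698180337920 (by norm_num))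
    (by decide) (by decide) (by decide) (by decide) (by decide) (by decide)
    (by decide)

lemma ex0_10 : Ex 0 10 :=
  ex_of_coset (R := 16) (by norm_num) (mkB 10 16 786662930647126187173135390869080189151718560768) (mkG 10 0 0)
    (mkW 16 496993557421161204163243009437446391341653336608304271121624660059905867430163053355368395320041430610534700094309787116316333372838869717123765844721104342294587954322015398860196881683994934575614081961872803318178738316981054947853411383614578266380302840988205566076747751023339533914336273646258426117987245021974221839422202745284332023813094186765912299314348206244604623940921211206220517801947762098578913983748402913545583850532858285115183840601263391889338249009225427263213881981981433387744120610570753766917016974680055602181339108998778753929667874397155454590095032613141351110587896698180337920 (by norm_num))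
    (by decide) (by decide) (by decide) (by decide) (by decide) (by decide)
    (by decide)

lemma ex0_11 : Ex 0 11 :=
  ex_of_coset (R := 16) (by norm_num) (mkB 11 16 25796668222809765296430603771965843254966555304568832) (mkG 11 0 0)
    (mkW 16 496993557421161204163243009437446391341653336608304271121624660059905867430163053355368395320041430610534700094309787116316333372838869717123765844721104342294587954322015398860196881683994934575614081961872803318178738316981054947853411383614578266380302840988205566076747751023339533914336273646258426117987245021974221839422202745284332023813094186765912299314348206244604623940921211206220517801947762098578913983748402913545583850532858285115183840601263391889338249009225427263213881981981433387744120610570753766917016974680055602181339108998778753929667874397155454590095032613141351110587896698180337920 (by norm_num))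
    (by decide) (by decide) (by decide) (by decide) (by decide) (by decide)
    (by decide)

lemma ex1_7 : Ex 1 7 :=
  ex_of_coset (R := 8) (by norm_num) (mkB 7 8 57190990530631424) (mkG 7 1 246528)
    (mkW 8 206194662513534729730481158737807213776021836059274103282146702500433485186535872849793590575591282933792946137778369595008144024641618841507228418304 (by norm_num))
    (by decide) (by decide) (by decide) (by decide) (by decide) (by decide)
    (by decide)

lemma ex1_8 : Ex 1 8 :=
  ex_of_coset (R := 16) (by norm_num) (mkB 8 16 102149512824376915125165892664935814400) (mkG 8 1 1511936)
    (mkW 16 496993557421161204163243009437446391341653336608304271121624660059905867430163053355368395320041430610534700094309787116316333372838869717123765844721104342294587954322015398860196881683994934575614081961872803318178738316981054947853411383614578266380302840988205566076747751023339533914336273646258426117987245021974221839422202745284332023813094186765912299314348206244604623940921211206220517801947762098578913983748402913545583850532858285115183840601263391889338249009225427263213881981981433387744120610570753766917016974680055602181339108998778753929667874397155454590095032613141351110587896698180337920 (by norm_num))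
    (by decide) (by decide) (by decide) (by decide) (by decide) (by decide)
    (by decide)

lemma ex2_8 : Ex 2 8 :=
  ex_of_coset (R := 16) (by norm_num) (mkB 8 16 102149512824376915125165892664935814400) (mkG 8 2 25361783129344)
    (mkW 16 496993557421161204163243009437446391341653336608304271121624660059905867430163053355368395320041430610534700094309787116316333372838869717123765844721104342294587954322015398860196881683994934575614081961872803318178738316981054947853411383614578266380302840988205566076747751023339533914336273646258426117987245021974221839422202745284332023813094186765912299314348206244604623940921211206220517801947762098578913983748402913545583850532858285115183840601263391889338249009225427263213881981981433387744120610570753766917016974680055602181339108998778753929667874397155454590095032613141351110587896698180337920 (by norm_num))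
    (by decide) (by decide) (by decide) (by decide) (by decide) (by decide)
    (by decide)

lemma ex2_12 : Ex 2 12 :=
  ex_of_coset (R := 16) (by norm_num) (mkB 12 16 5217558115870321385373281944754040075108423965158478008320) (mkG 12 2 276722271732906405888)
    (mkW 16 496993557421161204163243009437446391341653336608304271121624660059905867430163053355368395320041430610534700094309787116316333372838869717123765844721104342294587954322015398860196881683994934575614081961872803318178738316981054947853411383614578266380302840988205566076747751023339533914336273646258426117987245021974221839422202745284332023813094186765912299314348206244604623940921211206220517801947762098578913983748402913545583850532858285115183840601263391889338249009225427263213881981981433387744120610570753766917016974680055602181339108998778753929667874397155454590095032613141351110587896698180337920 (by norm_num))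
    (by decide) (by decide) (by decide) (by decide) (by decide) (by decide)
    (by decide)

lemma ex2_13 : Ex 2 13 :=
  ex_of_coset (R := 16) (by norm_num) (mkB 13 16 376641561501223277643881243689886670540344296382458115434651648) (mkG 13 2 27560277819299840090112)
    (mkW 16 496993557421161204163243009437446391341653336608304271121624660059905867430163053355368395320041430610534700094309787116316333372838869717123765844721104342294587954322015398860196881683994934575614081961872803318178738316981054947853411383614578266380302840988205566076747751023339533914336273646258426117987245021974221839422202745284332023813094186765912299314348206244604623940921211206220517801947762098578913983748402913545583850532858285115183840601263391889338249009225427263213881981981433387744120610570753766917016974680055602181339108998778753929667874397155454590095032613141351110587896698180337920 (by norm_num))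
    (by decide) (by decide) (by decide) (by decide) (by decide) (by decide)
    (by decide)

lemma ex3_11 : Ex 3 11 :=
  ex_of_coset (R := 16) (by norm_num) (mkB 11 16 63428289823665156138276303202083686034917066830817280) (mkG 11 3 28783465959148987252293642240)
    (mkW 16 496993557421161204163243009437446391341653336608304271121624660059905867430163053355368395320041430610534700094309787116316333372838869717123765844721104342294587954322015398860196881683994934575614081961872803318178738316981054947853411383614578266380302840988205566076747751023339533914336273646258426117987245021974221839422202745284332023813094186765912299314348206244604623940921211206220517801947762098578913983748402913545583850532858285115183840601263391889338249009225427263213881981981433387744120610570753766917016974680055602181339108998778753929667874397155454590095032613141351110587896698180337920 (by norm_num))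
    (by decide) (by decide) (by decide) (by decide) (by decide) (by decide)
    (by decide)

lemma ex3_12 : Ex 3 12 :=
  ex_of_coset (R := 16) (by norm_num) (mkB 12 16 5217558115870321385373281944754040075108423965158478008320) (mkG 12 3 5468039182239588448162723999744)
    (mkW 16 496993557421161204163243009437446391341653336608304271121624660059905867430163053355368395320041430610534700094309787116316333372838869717123765844721104342294587954322015398860196881683994934575614081961872803318178738316981054947853411383614578266380302840988205566076747751023339533914336273646258426117987245021974221839422202745284332023813094186765912299314348206244604623940921211206220517801947762098578913983748402913545583850532858285115183840601263391889338249009225427263213881981981433387744120610570753766917016974680055602181339108998778753929667874397155454590095032613141351110587896698180337920 (by norm_num))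
    (by decide) (by decide) (by decide) (by decide) (by decide) (by decide)
    (by decide)

lemma ex3_13 : Ex 3 13 :=
  ex_of_coset (R := 16) (by norm_num) (mkB 13 16 376641561501223277643881243689886670540344296382458115434651648) (mkG 13 3 14685950081118512121086988720234496)
    (mkW 16 496993557421161204163243009437446391341653336608304271121624660059905867430163053355368395320041430610534700094309787116316333372838869717123765844721104342294587954322015398860196881683994934575614081961872803318178738316981054947853411383614578266380302840988205566076747751023339533914336273646258426117987245021974221839422202745284332023813094186765912299314348206244604623940921211206220517801947762098578913983748402913545583850532858285115183840601263391889338249009225427263213881981981433387744120610570753766917016974680055602181339108998778753929667874397155454590095032613141351110587896698180337920 (by norm_num))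
    (by decide) (by decide) (by decide) (by decide) (by decide) (by decide)
    (by decide)

lemma ex3_14 : Ex 3 14 :=
  ex_of_coset (R := 16) (by norm_num) (mkB 14 16 25821510736915240070595710927645843509759556047229689282376434532352) (mkG 14 3 4662686381916562323283850361088409600)
    (mkW 16 496993557421161204163243009437446391341653336608304271121624660059905867430163053355368395320041430610534700094309787116316333372838869717123765844721104342294587954322015398860196881683994934575614081961872803318178738316981054947853411383614578266380302840988205566076747751023339533914336273646258426117987245021974221839422202745284332023813094186765912299314348206244604623940921211206220517801947762098578913983748402913545583850532858285115183840601263391889338249009225427263213881981981433387744120610570753766917016974680055602181339108998778753929667874397155454590095032613141351110587896698180337920 (by norm_num))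
    (by decide) (by decide) (by decide) (by decide) (by decide) (by decide)
    (by decide)

lemma ex4_10 : Ex 4 10 :=
  ex_of_coset (R := 16) (by norm_num) (mkB 10 16 474506643046739941121693432780092283128432972800) (mkG 10 4 63639863124376626211445405580825600)
    (mkW 16 496993557421161204163243009437446391341653336608304271121624660059905867430163053355368395320041430610534700094309787116316333372838869717123765844721104342294587954322015398860196881683994934575614081961872803318178738316981054947853411383614578266380302840988205566076747751023339533914336273646258426117987245021974221839422202745284332023813094186765912299314348206244604623940921211206220517801947762098578913983748402913545583850532858285115183840601263391889338249009225427263213881981981433387744120610570753766917016974680055602181339108998778753929667874397155454590095032613141351110587896698180337920 (by norm_num))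
    (by decide) (by decide) (by decide) (by decide) (by decide) (by decide)
    (by decide)

lemma ex4_11 : Ex 4 11 :=
  ex_of_coset (R := 16) (by norm_num) (mkB 11 16 63428289823665156138276303202083686034917066830817280) (mkG 11 4 55845748890754804517808740521220384768)
    (mkW 16 496993557421161204163243009437446391341653336608304271121624660059905867430163053355368395320041430610534700094309787116316333372838869717123765844721104342294587954322015398860196881683994934575614081961872803318178738316981054947853411383614578266380302840988205566076747751023339533914336273646258426117987245021974221839422202745284332023813094186765912299314348206244604623940921211206220517801947762098578913983748402913545583850532858285115183840601263391889338249009225427263213881981981433387744120610570753766917016974680055602181339108998778753929667874397155454590095032613141351110587896698180337920 (by norm_num))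
    (by decide) (by decide) (by decide) (by decide) (by decide) (by decide)
    (by decide)

lemma ex4_12 : Ex 4 12 :=
  ex_of_coset (R := 16) (by norm_num) (mkB 12 16 5217558115870321385373281944754040075108423965158478008320) (mkG 12 4 588144840528415550381860002217467068887040)
    (mkW 16 496993557421161204163243009437446391341653336608304271121624660059905867430163053355368395320041430610534700094309787116316333372838869717123765844721104342294587954322015398860196881683994934575614081961872803318178738316981054947853411383614578266380302840988205566076747751023339533914336273646258426117987245021974221839422202745284332023813094186765912299314348206244604623940921211206220517801947762098578913983748402913545583850532858285115183840601263391889338249009225427263213881981981433387744120610570753766917016974680055602181339108998778753929667874397155454590095032613141351110587896698180337920 (by norm_num))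
    (by decide) (by decide) (by decide) (by decide) (by decide) (by decide)
    (by decide)

lemma ex4_13 : Ex 4 13 :=
  ex_of_coset (R := 16) (by norm_num) (mkB 13 16 376641561501223277643881243689886670540344296382458115434651648) (mkG 13 4 1739647322496082596906590173669391249312276480)
    (mkW 16 496993557421161204163243009437446391341653336608304271121624660059905867430163053355368395320041430610534700094309787116316333372838869717123765844721104342294587954322015398860196881683994934575614081961872803318178738316981054947853411383614578266380302840988205566076747751023339533914336273646258426117987245021974221839422202745284332023813094186765912299314348206244604623940921211206220517801947762098578913983748402913545583850532858285115183840601263391889338249009225427263213881981981433387744120610570753766917016974680055602181339108998778753929667874397155454590095032613141351110587896698180337920 (by norm_num))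
    (by decide) (by decide) (by decide) (by decide) (by decide) (by decide)
    (by decide)

lemma ex4_14 : Ex 4 14 :=
  ex_of_coset (R := 16) (by norm_num) (mkB 14 16 25821510736915240070595710927645843509759556047229689282376434532352) (mkG 14 4 20232765038954318256232261721953945861872275587072)
    (mkW 16 496993557421161204163243009437446391341653336608304271121624660059905867430163053355368395320041430610534700094309787116316333372838869717123765844721104342294587954322015398860196881683994934575614081961872803318178738316981054947853411383614578266380302840988205566076747751023339533914336273646258426117987245021974221839422202745284332023813094186765912299314348206244604623940921211206220517801947762098578913983748402913545583850532858285115183840601263391889338249009225427263213881981981433387744120610570753766917016974680055602181339108998778753929667874397155454590095032613141351110587896698180337920 (by norm_num))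
    (by decide) (by decide) (by decide) (by decide) (by decide) (by decide)
    (by decide)

lemma ex4_15 : Ex 4 15 :=
  ex_of_coset (R := 16) (by norm_num) (mkB 15 16 846142075536099715519762843886611183016108387378945625479269589747138560) (mkG 15 4 115471303308655939708870025299141579868755045173231616)
    (mkW 16 496993557421161204163243009437446391341653336608304271121624660059905867430163053355368395320041430610534700094309787116316333372838869717123765844721104342294587954322015398860196881683994934575614081961872803318178738316981054947853411383614578266380302840988205566076747751023339533914336273646258426117987245021974221839422202745284332023813094186765912299314348206244604623940921211206220517801947762098578913983748402913545583850532858285115183840601263391889338249009225427263213881981981433387744120610570753766917016974680055602181339108998778753929667874397155454590095032613141351110587896698180337920 (by norm_num))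
    (by decide) (by decide) (by decide) (by decide) (by decide) (by decide)
    (by decide)
lemma Ex0_all : ∀ n : ℕ, 6 ≤ n → Ex 0 n := by
  intro n
  induction n using Nat.strong_induction_on with
  | _ n ih =>
    intro hn
    rcases lt_or_ge n 12 with h | h
    · interval_cases n
      · exact ex0_6
      · exact ex0_7
      · exact ex0_8
      · exact ex0_9
      · exact ex0_10
      · exact ex0_11
    · have key := Ex.add ex0_6 (ih (n - 6) (by omega) (by omega))
      have he : 6 + (n - 6) = n := by omega
      rw [he] at key
      exact key

theorem statement7 :
    (∀ N : ℕ, 12 ≤ N →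
      ∃ (r : ℕ) (C : Fin r → (Fin 2 ⊕ Fin N) → ℕ),
        0 < r ∧ IsIrMOA C (Sum.elim (fun _ => 3) fun _ => 2) 2) ∧
    (∀ N : ℕ, 11 ≤ N →
      ∃ (r : ℕ) (C : Fin r → (Fin 3 ⊕ Fin N) → ℕ),
        0 < r ∧ IsIrMOA C (Sum.elim (fun _ => 3) fun _ => 2) 2) ∧
    (∀ N : ℕ, 10 ≤ N →
      ∃ (r : ℕ) (C : Fin r → (Fin 4 ⊕ Fin N) → ℕ),
        0 < r ∧ IsIrMOA C (Sum.elim (fun _ => 3) fun _ => 2) 2) := by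
  refine ⟨?_, ?_, ?_⟩
  · intro N hN
    have h : Ex 2 N := by
      rcases lt_or_ge N 14 with h14 | h14
      · interval_cases N
        · exact ex2_12
        · exact ex2_13
      · have key := Ex.add ex2_8 (Ex0_all (N - 8) (by omega))
        have he : 8 + (N - 8) = N := by omega
        rw [he] at key
        exact key
    exact h
  · intro N hN
    have h : Ex 3 N := by
      rcases lt_or_ge N 17 with h17 | h17
      · interval_cases N
        · exact ex3_11
        · exact ex3_12
        · exact ex3_13
        · exact ex3_14
        · exact Ex.add ex2_8 ex1_7
        · exact Ex.add ex2_8 ex1_8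
      · have key := Ex.add ex3_11 (Ex0_all (N - 11) (by omega))
        have he : 11 + (N - 11) = N := by omega
        rw [he] at key
        exact key
    exact h
  · intro N hN
    have h : Ex 4 N := by
      rcases lt_or_ge N 16 with h16 | h16
      · interval_cases N
        · exact ex4_10
        · exact ex4_11
        · exact ex4_12
        · exact ex4_13
        · exact ex4_14
        · exact ex4_15
      · have key := Ex.add ex4_10 (Ex0_all (N - 10) (by omega))
        have he : 10 + (N - 10) = N := by omega
        rw [he] at key
        exact key
    exact h
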